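/- Let X, Y be finite sets with |X| ≤ |Y|, let (d_x : x ∈ X) be given nonnegative integers with d_x ≤ |Y|, and let L be the random bipartite graph where each x ∈ X independently gets a uniform s-subset of Y as its neighborhood. Among all bipartite graphs F on X ∪ Y with deg_F(x) = d_x for all x ∈ X, the probability that L ∩ F admits an X-perfect matching is minimized by the graph F in which, for some fixed linear ordering of Y, each x ∈ X is adjacent to the first d_x vertices of Y. -/

import Mathlib

open scoped Classical
open Finset

set_option linter.unusedSectionVars false
set_option linter.unusedVariables false
set_option linter.unnecessarySeqFocus false
set_option maxHeartbeats 1000000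


section Core
variable {X : Type*} [Fintype X] [DecidableEq X] {N : ℕ}

def Mt (E : Finset (X × Fin N)) (g : X → Finset (Fin N)) : Prop :=
  ∃ f : X ↪ Fin N, ∀ x, (x, f x) ∈ E ∧ f x ∈ g x

noncomputable def cpr (F : Finset (X × Fin N)) (i j : Fin N) : Finset (X × Fin N) :=
  Finset.univ.filter (fun p =>
    if (p.1, j) ∈ F ∧ (p.1, i) ∉ F then (p.2 = i ∨ (p ∈ F ∧ p.2 ≠ j)) else p ∈ F)

variable (F : Finset (X × Fin N)) (i j : Fin N) (g : X → Finset (Fin N))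

lemma mem_cpr (x : X) (y : Fin N) :
    (x, y) ∈ cpr F i j ↔
      (if (x, j) ∈ F ∧ (x, i) ∉ F then (y = i ∨ ((x, y) ∈ F ∧ y ≠ j)) else (x, y) ∈ F) := by
  simp [cpr]

lemma cpr_i (x : X) : (x, i) ∈ cpr F i j ↔ ((x, i) ∈ F ∨ (x, j) ∈ F) := by
  rw [mem_cpr]; split_ifs with h <;> tauto

lemma cpr_j (hij : i ≠ j) (x : X) : (x, j) ∈ cpr F i j ↔ ((x, j) ∈ F ∧ (x, i) ∈ F) := by
  rw [mem_cpr]; split_ifs with h <;> simp_all <;> tauto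

lemma cpr_other (x : X) (y : Fin N) (hyi : y ≠ i) (hyj : y ≠ j) :
    ((x, y) ∈ cpr F i j ↔ (x, y) ∈ F) := by
  rw [mem_cpr]; split_ifs with h <;> tauto

def Pb (s : Set X) : Prop :=
  ∃ f : X → Fin N, Set.InjOn f s ∧
    ∀ z ∈ s, (z, f z) ∈ F ∧ f z ∈ g z ∧ f z ≠ i ∧ f z ≠ j

def Qr (u v : X) : Prop := Pb F i j g {z | z ≠ u ∧ z ≠ v}

lemma Qr_symm {u v : X} (h : Qr F i j g u v) : Qr F i j g v u := by
  have : {z : X | z ≠ v ∧ z ≠ u} = {z | z ≠ u ∧ z ≠ v} := by ext z; exact and_comm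
  unfold Qr; rw [this]; exact h

def inV (x : X) : Prop := (x, i) ∈ F ∧ (x, j) ∈ F ∧ (i ∈ g x ↔ j ∉ g x)
def inW (x : X) : Prop := (x, j) ∈ F ∧ (x, i) ∉ F ∧ (i ∈ g x ↔ j ∉ g x)
def inD (x : X) : Prop := (x, j) ∈ F ∧ (x, i) ∉ F ∧ j ∈ g x
def inDC (h : X → Finset (Fin N)) (x : X) : Prop := (x, j) ∈ F ∧ (x, i) ∉ F ∧ i ∈ h x

def ER (u v : X) : Prop := inV F i j g u ∧ inV F i j g v ∧ u ≠ v ∧ Qr F i j g u v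

def inT (Dp : X → Prop) (v : X) : Prop :=
  ∃ u, Relation.ReflTransGen (ER F i j g) v u ∧
    (inV F i j g u ∧ ∃ x, Dp x ∧ x ≠ u ∧ Qr F i j g u x)

lemma inT_inV {Dp : X → Prop} {v : X} (h : inT F i j g Dp v) : inV F i j g v := by
  obtain ⟨u, hp, hu, _⟩ := h
  cases hp.cases_head with
  | inl h => exact h ▸ hu
  | inr h => obtain ⟨c, herc, _⟩ := h; exact herc.1

noncomputable def PsiG (Dp : X → Prop) : X → Finset (Fin N) := fun x =>
  if inT F i j g Dp x ∨ inW F i j g x then (g x).image (Equiv.swap i j) else g x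

noncomputable def Psi : X → Finset (Fin N) := PsiG F i j g (inD F i j g)

lemma mem_image_swap (S : Finset (Fin N)) (y : Fin N) :
    y ∈ S.image (Equiv.swap i j) ↔ Equiv.swap i j y ∈ S := by
  constructor
  · rintro h; obtain ⟨z, hz, rfl⟩ := Finset.mem_image.1 h
    rwa [Equiv.swap_apply_self]
  · intro h; exact Finset.mem_image.2 ⟨_, h, Equiv.swap_apply_self i j y⟩

lemma mem_PsiG_i (Dp : X → Prop) (x : X) :
    i ∈ PsiG F i j g Dp x ↔
      (if inT F i j g Dp x ∨ inW F i j g x then j ∈ g x else i ∈ g x) := by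
  unfold PsiG; split_ifs with h
  · rw [mem_image_swap, Equiv.swap_apply_left]
  · rfl

lemma mem_PsiG_j (Dp : X → Prop) (x : X) :
    j ∈ PsiG F i j g Dp x ↔
      (if inT F i j g Dp x ∨ inW F i j g x then i ∈ g x else j ∈ g x) := by
  unfold PsiG; split_ifs with h
  · rw [mem_image_swap, Equiv.swap_apply_right]
  · rfl

lemma mem_PsiG_other (Dp : X → Prop) (x : X) (y : Fin N) (hyi : y ≠ i) (hyj : y ≠ j) :
    (y ∈ PsiG F i j g Dp x ↔ y ∈ g x) := by
  unfold PsiG; split_ifs with h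
  · rw [mem_image_swap, Equiv.swap_apply_of_ne_of_ne hyi hyj]
  · rfl

lemma card_PsiG (Dp : X → Prop) (x : X) : (PsiG F i j g Dp x).card = (g x).card := by
  unfold PsiG; split_ifs with h
  · exact Finset.card_image_of_injective _ (Equiv.injective _)
  · rfl



lemma one_match {u : X} (hQ : Pb F i j g {z | z ≠ u}) {a : Fin N}
    (ha : a = i ∨ a = j) (hua : (u, a) ∈ F) (hga : a ∈ g u) : Mt F g := by
  obtain ⟨f0, hinj, hcond⟩ := hQ
  have hne : ∀ z, z ≠ u → f0 z ≠ a := by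
    intro z hz
    rcases ha with rfl | rfl
    · exact (hcond z hz).2.2.1
    · exact (hcond z hz).2.2.2
  refine ⟨⟨fun z => if z = u then a else f0 z, ?_⟩, ?_⟩
  · intro z1 z2 h
    dsimp only at h
    by_cases h1 : z1 = u
    · by_cases h2 : z2 = u
      · rw [h1, h2]
      · rw [if_pos h1, if_neg h2] at h; exact absurd h.symm (hne z2 h2)
    · by_cases h2 : z2 = u
      · rw [if_neg h1, if_pos h2] at h; exact absurd h (hne z1 h1)
      · rw [if_neg h1, if_neg h2] at h; exact hinj h1 h2 h
  · intro x
    show (x, (if x = u then a else f0 x)) ∈ F ∧ (if x = u then a else f0 x) ∈ g x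
    by_cases hx : x = u
    · subst hx; rw [if_pos rfl]; exact ⟨hua, hga⟩
    · rw [if_neg hx]; exact ⟨(hcond x hx).1, (hcond x hx).2.1⟩

lemma two_match {u v : X} (huv : u ≠ v) (hQ : Qr F i j g u v) {a b : Fin N}
    (hab : a ≠ b) (ha : a = i ∨ a = j) (hb : b = i ∨ b = j)
    (hua : (u, a) ∈ F) (hga : a ∈ g u) (hvb : (v, b) ∈ F) (hgb : b ∈ g v) : Mt F g := by
  obtain ⟨f0, hinj, hcond⟩ := hQ
  have hnea : ∀ z, z ≠ u → z ≠ v → f0 z ≠ a := by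
    intro z hz1 hz2
    rcases ha with rfl | rfl
    · exact (hcond z ⟨hz1, hz2⟩).2.2.1
    · exact (hcond z ⟨hz1, hz2⟩).2.2.2
  have hneb : ∀ z, z ≠ u → z ≠ v → f0 z ≠ b := by
    intro z hz1 hz2
    rcases hb with rfl | rfl
    · exact (hcond z ⟨hz1, hz2⟩).2.2.1
    · exact (hcond z ⟨hz1, hz2⟩).2.2.2
  refine ⟨⟨fun z => if z = u then a else if z = v then b else f0 z, ?_⟩, ?_⟩
  · intro z1 z2 h
    dsimp only at h
    by_cases h1 : z1 = u
    · rw [if_pos h1] at h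
      by_cases h2 : z2 = u
      · rw [h1, h2]
      · rw [if_neg h2] at h
        by_cases h4 : z2 = v
        · rw [if_pos h4] at h; exact absurd h hab
        · rw [if_neg h4] at h; exact absurd h.symm (hnea z2 h2 h4)
    · rw [if_neg h1] at h
      by_cases h3 : z1 = v
      · rw [if_pos h3] at h
        by_cases h2 : z2 = u
        · rw [if_pos h2] at h; exact absurd h.symm hab
        · rw [if_neg h2] at h
          by_cases h4 : z2 = v
          · rw [h3, h4]
          · rw [if_neg h4] at h; exact absurd h.symm (hneb z2 h2 h4)
      · rw [if_neg h3] at h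
        by_cases h2 : z2 = u
        · rw [if_pos h2] at h; exact absurd h (hnea z1 h1 h3)
        · rw [if_neg h2] at h
          by_cases h4 : z2 = v
          · rw [if_pos h4] at h; exact absurd h (hneb z1 h1 h3)
          · rw [if_neg h4] at h; exact hinj ⟨h1, h3⟩ ⟨h2, h4⟩ h
  · intro x
    show (x, (if x = u then a else if x = v then b else f0 x)) ∈ F ∧
      (if x = u then a else if x = v then b else f0 x) ∈ g x
    by_cases hx : x = u
    · subst hx; rw [if_pos rfl]; exact ⟨hua, hga⟩
    · by_cases hx2 : x = v
      · subst hx2; rw [if_neg hx, if_pos rfl]; exact ⟨hvb, hgb⟩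
      · rw [if_neg hx, if_neg hx2]
        exact ⟨(hcond x ⟨hx, hx2⟩).1, (hcond x ⟨hx, hx2⟩).2.1⟩




theorem core (hij : i ≠ j) (hnM : ¬ Mt F g) :
    ¬ Mt (cpr F i j) (Psi F i j g) := by
  -- T-structure: every vertex of T has j in g, not i
  have hT : ∀ v, inT F i j g (inD F i j g) v → j ∈ g v ∧ i ∉ g v := by
    rintro v ⟨u, hpath, huV, x, hxD, hxu, hQux⟩
    have hju : j ∈ g u := by
      by_contra hju
      have hiu : i ∈ g u := huV.2.2.mpr hju
      exact hnM (two_match F i j g (Ne.symm hxu) (Qr_symm F i j g hQux |> Qr_symm F i j g |> fun h => h)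
        hij (Or.inl rfl) (Or.inr rfl) huV.1 hiu hxD.1 hxD.2.2)
    clear hxD hxu
    induction hpath using Relation.ReflTransGen.head_induction_on with
    | refl => exact ⟨hju, fun hi => (huV.2.2.mp hi) hju⟩
    | head h_er _ IH =>
      rename_i a c _
      obtain ⟨hVa, hVc, hac, hQac⟩ := h_er
      have hja : j ∈ g a := by
        by_contra hja
        have hia : i ∈ g a := hVa.2.2.mpr hja
        exact hnM (two_match F i j g hac hQac hij (Or.inl rfl) (Or.inr rfl)
          hVa.1 hia hVc.2.1 IH.1)
      exact ⟨hja, fun hi => (hVa.2.2.mp hi) hja⟩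
  rintro ⟨f, hf⟩
  have hbase : ∀ z, f z ≠ i → f z ≠ j → ((z, f z) ∈ F ∧ f z ∈ g z) := by
    intro z hzi hzj
    obtain ⟨h1, h2⟩ := hf z
    exact ⟨(cpr_other F i j z _ hzi hzj).1 h1,
      (mem_PsiG_other F i j g _ z _ hzi hzj).1 h2⟩
  by_cases hiu : ∃ xi, f xi = i
  · obtain ⟨xi, hxi⟩ := hiu
    -- claim about xi
    have claim_xi : ((xi, i) ∈ F ∧ i ∈ g xi) ∨
        ((xi, j) ∈ F ∧ j ∈ g xi ∧
          (inT F i j g (inD F i j g) xi ∨ inD F i j g xi)) := by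
      have h1 : (xi, i) ∈ cpr F i j := by have := (hf xi).1; rwa [hxi] at this
      have h2 : i ∈ Psi F i j g xi := by have := (hf xi).2; rwa [hxi] at this
      rw [Psi, mem_PsiG_i] at h2
      by_cases hflip : inT F i j g (inD F i j g) xi ∨ inW F i j g xi
      · rw [if_pos hflip] at h2
        rcases hflip with hTxi | hWxi
        · exact Or.inr ⟨(inT_inV F i j g hTxi).2.1, h2, Or.inl hTxi⟩
        · exact Or.inr ⟨hWxi.1, h2, Or.inr ⟨hWxi.1, hWxi.2.1, h2⟩⟩
      · rw [if_neg hflip] at h2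
        rcases (cpr_i F i j xi).1 h1 with hiF | hjF
        · exact Or.inl ⟨hiF, h2⟩
        · by_cases hiF : (xi, i) ∈ F
          · exact Or.inl ⟨hiF, h2⟩
          · by_cases hj2 : j ∈ g xi
            · exact Or.inr ⟨hjF, hj2, Or.inr ⟨hjF, hiF, hj2⟩⟩
            · exact absurd (Or.inr ⟨hjF, hiF, iff_of_true h2 hj2⟩) hflip
    by_cases hju : ∃ xj, f xj = j
    · obtain ⟨xj, hxj⟩ := hju
      have hne : xi ≠ xj := by
        intro h; rw [h, hxj] at hxi; exact hij hxi.symm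
      have hQ : Qr F i j g xi xj := by
        refine ⟨f, f.injective.injOn, ?_⟩
        rintro z ⟨hz1, hz2⟩
        have hfi : f z ≠ i := fun h => hz1 (f.injective (h.trans hxi.symm))
        have hfj : f z ≠ j := fun h => hz2 (f.injective (h.trans hxj.symm))
        exact ⟨(hbase z hfi hfj).1, (hbase z hfi hfj).2, hfi, hfj⟩
      -- claim about xj
      have hcprj : (xj, j) ∈ cpr F i j := by have := (hf xj).1; rwa [hxj] at this
      have hxjF : (xj, j) ∈ F ∧ (xj, i) ∈ F := (cpr_j F i j hij xj).1 hcprj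
      have hxj_nW : ¬ inW F i j g xj := fun h => h.2.1 hxjF.2
      have hxj_nT : ¬ inT F i j g (inD F i j g) xj := by
        intro h
        have h2 : j ∈ Psi F i j g xj := by have := (hf xj).2; rwa [hxj] at this
        rw [Psi, mem_PsiG_j, if_pos (Or.inl h)] at h2
        exact (hT xj h).2 h2
      have hxj_nf : ¬ (inT F i j g (inD F i j g) xj ∨ inW F i j g xj) := by
        rintro (h | h); exacts [hxj_nT h, hxj_nW h]
      have hgxj : j ∈ g xj := by
        have h2 : j ∈ Psi F i j g xj := by have := (hf xj).2; rwa [hxj] at this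
        rwa [Psi, mem_PsiG_j, if_neg hxj_nf] at h2
      rcases claim_xi with ⟨hF, hg⟩ | ⟨hFj, hgj, hTD⟩
      · -- f itself is a matching for F, g
        refine hnM ⟨f, fun x => ?_⟩
        by_cases hx1 : x = xi
        · subst hx1; rw [hxi]; exact ⟨hF, hg⟩
        · by_cases hx2 : x = xj
          · subst hx2; rw [hxj]; exact ⟨hxjF.1, hgxj⟩
          · exact hbase x (fun h => hx1 (f.injective (h.trans hxi.symm)))
              (fun h => hx2 (f.injective (h.trans hxj.symm)))
      · by_cases hgij : i ∈ g xj
        · exact hnM (two_match F i j g hne hQ (Ne.symm hij) (Or.inr rfl) (Or.inl rfl)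
            hFj hgj hxjF.2 hgij)
        · have hVxj : inV F i j g xj := ⟨hxjF.2, hxjF.1, iff_of_false hgij (not_not_intro hgxj)⟩
          rcases hTD with hTxi | hDxi
          · have hVxi := inT_inV F i j g hTxi
            obtain ⟨u, hpath, hrest⟩ := hTxi
            have her : ER F i j g xj xi :=
              ⟨hVxj, hVxi, Ne.symm hne, Qr_symm F i j g hQ⟩
            exact hxj_nT ⟨u, Relation.ReflTransGen.head her hpath, hrest⟩
          · exact hxj_nT ⟨xj, Relation.ReflTransGen.refl, hVxj,
              xi, hDxi, hne, Qr_symm F i j g hQ⟩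
    · -- i-user but no j-user
      rcases claim_xi with ⟨hF, hg⟩ | ⟨hFj, hgj, _⟩
      · refine hnM ⟨f, fun x => ?_⟩
        by_cases hx1 : x = xi
        · subst hx1; rw [hxi]; exact ⟨hF, hg⟩
        · exact hbase x (fun h => hx1 (f.injective (h.trans hxi.symm)))
            (fun h => hju ⟨x, h⟩)
      · refine hnM (one_match F i j g ?_ (Or.inr rfl) hFj hgj)
        refine ⟨f, f.injective.injOn, ?_⟩
        intro z hz
        have hfi : f z ≠ i := fun h => hz (f.injective (h.trans hxi.symm))
        have hfj : f z ≠ j := fun h => hju ⟨z, h⟩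
        exact ⟨(hbase z hfi hfj).1, (hbase z hfi hfj).2, hfi, hfj⟩
  · by_cases hju : ∃ xj, f xj = j
    · obtain ⟨xj, hxj⟩ := hju
      have hcprj : (xj, j) ∈ cpr F i j := by have := (hf xj).1; rwa [hxj] at this
      have hxjF : (xj, j) ∈ F ∧ (xj, i) ∈ F := (cpr_j F i j hij xj).1 hcprj
      have hxj_nW : ¬ inW F i j g xj := fun h => h.2.1 hxjF.2
      have hxj_nT : ¬ inT F i j g (inD F i j g) xj := by
        intro h
        have h2 : j ∈ Psi F i j g xj := by have := (hf xj).2; rwa [hxj] at this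
        rw [Psi, mem_PsiG_j, if_pos (Or.inl h)] at h2
        exact (hT xj h).2 h2
      have hgxj : j ∈ g xj := by
        have h2 : j ∈ Psi F i j g xj := by have := (hf xj).2; rwa [hxj] at this
        rw [Psi, mem_PsiG_j, if_neg ?_] at h2
        · exact h2
        · rintro (h | h); exacts [hxj_nT h, hxj_nW h]
      refine hnM ⟨f, fun x => ?_⟩
      by_cases hx2 : x = xj
      · subst hx2; rw [hxj]; exact ⟨hxjF.1, hgxj⟩
      · exact hbase x (fun h => hiu ⟨x, h⟩)
          (fun h => hx2 (f.injective (h.trans hxj.symm)))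
    · exact hnM ⟨f, fun x => hbase x (fun h => hiu ⟨x, h⟩) (fun h => hju ⟨x, h⟩)⟩

section Inv
variable {F : Finset (X × Fin N)} {i j : Fin N} {g : X → Finset (Fin N)}

lemma Pb_Psi (s : Set X) : Pb F i j (Psi F i j g) s ↔ Pb F i j g s := by
  constructor <;>
  · rintro ⟨f0, hinj, hc⟩
    refine ⟨f0, hinj, fun z hz => ?_⟩
    obtain ⟨h1, h2, h3, h4⟩ := hc z hz
    refine ⟨h1, ?_, h3, h4⟩
    first
      | exact (mem_PsiG_other F i j g _ z _ h3 h4).1 h2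
      | exact (mem_PsiG_other F i j g _ z _ h3 h4).2 h2

lemma Qr_Psi (u v : X) : Qr F i j (Psi F i j g) u v ↔ Qr F i j g u v := Pb_Psi _

lemma inV_Psi (x : X) : inV F i j (Psi F i j g) x ↔ inV F i j g x := by
  unfold inV
  rw [Psi, mem_PsiG_i, mem_PsiG_j]
  split_ifs with h <;> tauto

lemma inW_Psi (x : X) : inW F i j (Psi F i j g) x ↔ inW F i j g x := by
  unfold inW
  rw [Psi, mem_PsiG_i, mem_PsiG_j]
  split_ifs with h <;> tauto

lemma ER_Psi (u v : X) : ER F i j (Psi F i j g) u v ↔ ER F i j g u v := by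
  unfold ER
  rw [inV_Psi, inV_Psi, Qr_Psi]

lemma inT_Psi {D1 D2 : X → Prop} (hD : ∀ x, D1 x ↔ D2 x) (v : X) :
    inT F i j (Psi F i j g) D1 v ↔ inT F i j g D2 v := by
  unfold inT
  constructor
  · rintro ⟨u, hp, hV, x, hx, hxu, hQ⟩
    exact ⟨u, Relation.ReflTransGen.mono (r := ER F i j (Psi F i j g)) (p := ER F i j g) (fun a b h => (ER_Psi a b).1 h) v u hp, (inV_Psi u).1 hV, x, (hD x).1 hx, hxu,
      (Qr_Psi u x).1 hQ⟩
  · rintro ⟨u, hp, hV, x, hx, hxu, hQ⟩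
    exact ⟨u, Relation.ReflTransGen.mono (r := ER F i j g) (p := ER F i j (Psi F i j g)) (fun a b h => (ER_Psi a b).2 h) v u hp, (inV_Psi u).2 hV, x, (hD x).2 hx, hxu,
      (Qr_Psi u x).2 hQ⟩

lemma inDC_Psi (hij : i ≠ j) (x : X) :
    inDC F i j (Psi F i j g) x ↔ inD F i j g x := by
  unfold inDC inD
  by_cases hjF : (x, j) ∈ F
  · by_cases hiF : (x, i) ∈ F
    · tauto
    · have hnT : ¬ inT F i j g (inD F i j g) x := fun h => hiF (inT_inV F i j g h).1
      rw [Psi, mem_PsiG_i]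
      by_cases hW : inW F i j g x
      · rw [if_pos (Or.inr hW)]
      · rw [if_neg (by rintro (h | h); exacts [hnT h, hW h])]
        have : i ∈ g x ↔ j ∈ g x := by
          unfold inW at hW; tauto
        tauto
  · tauto

lemma Psi_leftInv (hij : i ≠ j) :
    PsiG F i j (Psi F i j g) (inDC F i j (Psi F i j g)) = g := by
  funext x
  have hcond : (inT F i j (Psi F i j g) (inDC F i j (Psi F i j g)) x ∨
      inW F i j (Psi F i j g) x) ↔
      (inT F i j g (inD F i j g) x ∨ inW F i j g x) := by
    rw [inT_Psi (inDC_Psi hij), inW_Psi]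
  unfold PsiG
  by_cases h : inT F i j g (inD F i j g) x ∨ inW F i j g x
  · rw [if_pos (hcond.2 h)]
    rw [Psi]
    unfold PsiG
    rw [if_pos h, Finset.image_image]
    have : (Equiv.swap i j) ∘ (Equiv.swap i j) = id := by
      funext y; simp [Equiv.swap_apply_self]
    rw [this, Finset.image_id]
  · rw [if_neg (fun hh => h (hcond.1 hh))]
    rw [Psi]
    unfold PsiG
    rw [if_neg h]

end Inv

noncomputable def cnt (s : ℕ) (E : Finset (X × Fin N)) : ℕ :=
  (Finset.univ.filter
    (fun g : {g : X → Finset (Fin N) // ∀ x, (g x).card = s} =>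
      ∃ f : X ↪ Fin N, ∀ x, (x, f x) ∈ E ∧ f x ∈ g.1 x)).card

lemma cnt_eq (s : ℕ) (E : Finset (X × Fin N)) :
    cnt s E = (Finset.univ.filter
      (fun g : {g : X → Finset (Fin N) // ∀ x, (g x).card = s} => Mt E g.1)).card := by
  unfold cnt
  apply congrArg Finset.card
  apply Finset.filter_congr
  exact fun x _ => Iff.rfl

lemma cnt_cpr_le (s : ℕ) (F : Finset (X × Fin N)) {i j : Fin N} (hij : i ≠ j) :
    cnt s (cpr F i j) ≤ cnt s F := by
  classical
  set Ω := {g : X → Finset (Fin N) // ∀ x, (g x).card = s}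
  set A := Finset.univ.filter (fun g : Ω => ¬ Mt F g.1) with hA
  set B := Finset.univ.filter (fun g : Ω => ¬ Mt (cpr F i j) g.1) with hB
  have hmap : ∀ g : Ω, ∀ x, ((Psi F i j g.1) x).card = s :=
    fun g x => (card_PsiG F i j g.1 _ x).trans (g.2 x)
  have hcard : A.card ≤ B.card := by
    apply Finset.card_le_card_of_injOn (fun g => ⟨Psi F i j g.1, hmap g⟩)
    · intro g hg
      rw [hA, Finset.mem_coe, Finset.mem_filter] at hg
      rw [hB, Finset.mem_coe, Finset.mem_filter]
      exact ⟨Finset.mem_univ _, core F i j g.1 hij hg.2⟩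
    · intro g1 _ g2 _ heq
      have h1 : Psi F i j g1.1 = Psi F i j g2.1 := congrArg Subtype.val heq
      have : g1.1 = g2.1 := by
        have e1 := Psi_leftInv (F := F) (g := g1.1) hij
        have e2 := Psi_leftInv (F := F) (g := g2.1) hij
        rw [← e1, ← e2, h1]
      exact Subtype.ext this
  have t1 : cnt s F + A.card = Fintype.card Ω := by
    rw [cnt_eq]
    exact Finset.card_filter_add_card_filter_not
      (s := (Finset.univ : Finset Ω)) (p := fun g : Ω => Mt F g.1)
  have t2 : cnt s (cpr F i j) + B.card = Fintype.card Ω := by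
    rw [cnt_eq]
    exact Finset.card_filter_add_card_filter_not
      (s := (Finset.univ : Finset Ω)) (p := fun g : Ω => Mt (cpr F i j) g.1)
  omega

section Cpr
variable (F : Finset (X × Fin N)) (i j : Fin N)

noncomputable def row (x : X) : Finset (Fin N) :=
  Finset.univ.filter (fun y : Fin N => (x, y) ∈ F)

lemma mem_row (x : X) (y : Fin N) : y ∈ row F x ↔ (x, y) ∈ F := by simp [row]

lemma row_cpr_pos (x : X) (hc : (x, j) ∈ F ∧ (x, i) ∉ F) :
    row (cpr F i j) x = insert i ((row F x).erase j) := by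
  ext y
  rw [mem_row, mem_cpr, if_pos hc, Finset.mem_insert, Finset.mem_erase, mem_row]
  tauto

lemma row_cpr_neg (x : X) (hc : ¬ ((x, j) ∈ F ∧ (x, i) ∉ F)) :
    row (cpr F i j) x = row F x := by
  ext y
  rw [mem_row, mem_cpr, if_neg hc, mem_row]

lemma card_row_cpr (hij : i ≠ j) (x : X) : (row (cpr F i j) x).card = (row F x).card := by
  by_cases hc : (x, j) ∈ F ∧ (x, i) ∉ F
  · rw [row_cpr_pos F i j x hc]
    have hjr : j ∈ row F x := (mem_row F x j).2 hc.1
    have hir : i ∉ (row F x).erase j := fun h => hc.2 ((mem_row F x i).1 (Finset.mem_of_mem_erase h))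
    rw [Finset.card_insert_of_notMem hir, Finset.card_erase_of_mem hjr]
    have : 1 ≤ (row F x).card := Finset.card_pos.2 ⟨j, hjr⟩
    omega
  · rw [row_cpr_neg F i j x hc]

lemma sum_row (f : X × Fin N → ℕ) :
    ∑ p ∈ F, f p = ∑ x ∈ Finset.univ, ∑ y ∈ row F x, f (x, y) := by
  rw [← Finset.sum_fiberwise_of_maps_to (g := Prod.fst) (fun p _ => Finset.mem_univ p.1)]
  refine Finset.sum_congr rfl (fun x _ => ?_)
  have : F.filter (fun p => p.1 = x) = (row F x).image (fun y => (x, y)) := by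
    ext p
    simp only [Finset.mem_filter, Finset.mem_image, mem_row]
    constructor
    · rintro ⟨hp, rfl⟩; exact ⟨p.2, hp, rfl⟩
    · rintro ⟨y, hy, rfl⟩; exact ⟨hy, rfl⟩
  rw [this, Finset.sum_image (by intro a _ b _ h; exact (Prod.mk.injEq x a x b ▸ h).2)]

lemma wt_cpr_lt (hij : (i : ℕ) < (j : ℕ)) {x0 : X} (h0 : (x0, j) ∈ F ∧ (x0, i) ∉ F) :
    ∑ p ∈ cpr F i j, ((p.2 : ℕ)) < ∑ p ∈ F, ((p.2 : ℕ)) := by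
  rw [sum_row (cpr F i j) (fun p => (p.2 : ℕ)), sum_row F (fun p => (p.2 : ℕ))]
  have hle : ∀ x, (∀ y ∈ row (cpr F i j) x, True) →
      ∑ y ∈ row (cpr F i j) x, (y : ℕ) ≤ ∑ y ∈ row F x, (y : ℕ) := by
    intro x _
    by_cases hc : (x, j) ∈ F ∧ (x, i) ∉ F
    · rw [row_cpr_pos F i j x hc]
      have hjr : j ∈ row F x := (mem_row F x j).2 hc.1
      have hir : i ∉ (row F x).erase j :=
        fun h => hc.2 ((mem_row F x i).1 (Finset.mem_of_mem_erase h))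
      rw [Finset.sum_insert hir]
      have h2 : ∑ y ∈ (row F x).erase j, ((y : ℕ)) + (j : ℕ) = ∑ y ∈ row F x, (y : ℕ) :=
        Finset.sum_erase_add _ _ hjr
      omega
    · rw [row_cpr_neg F i j x hc]
  have hstrict : ∑ y ∈ row (cpr F i j) x0, (y : ℕ) < ∑ y ∈ row F x0, (y : ℕ) := by
    rw [row_cpr_pos F i j x0 h0]
    have hjr : j ∈ row F x0 := (mem_row F x0 j).2 h0.1
    have hir : i ∉ (row F x0).erase j :=
      fun h => h0.2 ((mem_row F x0 i).1 (Finset.mem_of_mem_erase h))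
    rw [Finset.sum_insert hir]
    have h2 : ∑ y ∈ (row F x0).erase j, ((y : ℕ)) + (j : ℕ) = ∑ y ∈ row F x0, (y : ℕ) :=
      Finset.sum_erase_add _ _ hjr
    omega
  exact Finset.sum_lt_sum (fun x _ => hle x (fun _ _ => trivial)) ⟨x0, Finset.mem_univ x0, hstrict⟩

lemma closed_eq (d : X → ℕ)
    (hd : ∀ x, (row F x).card = d x)
    (hcl : ∀ p ∈ F, ∀ q : Fin N, (q : ℕ) < (p.2 : ℕ) → (p.1, q) ∈ F) :
    F = Finset.univ.filter (fun p : X × Fin N => (p.2 : ℕ) < d p.1) := by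
  ext p
  rw [Finset.mem_filter]
  refine ⟨fun hp => ⟨Finset.mem_univ p, ?_⟩, fun ⟨_, hp⟩ => ?_⟩
  · have hIic : Finset.Iic p.2 ⊆ row F p.1 := by
      intro q hq
      rw [Finset.mem_Iic] at hq
      rcases lt_or_eq_of_le hq with h | h
      · exact (mem_row F p.1 q).2 (hcl p hp q (by rwa [Fin.lt_def] at h))
      · rw [h, mem_row]; exact hp
    have := Finset.card_le_card hIic
    rw [Fin.card_Iic, hd p.1] at this
    omega
  · by_contra hnp
    have hsub : row F p.1 ⊆ Finset.Iio p.2 := by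
      intro z hz
      rw [Finset.mem_Iio]
      rcases lt_trichotomy z p.2 with h | h | h
      · exact h
      · exact absurd ((mem_row F p.1 z).1 hz) (by rw [h] at hz ⊢; exact fun hh => hnp (by
          have := (mem_row F p.1 p.2).1 hz; exact this))
      · exact absurd (hcl (p.1, z) ((mem_row F p.1 z).1 hz) p.2 (by rwa [← Fin.lt_def]))
          (fun hh => hnp hh)
    have := Finset.card_le_card hsub
    rw [Fin.card_Iio, hd p.1] at this
    omega

end Cpr

lemma key (s : ℕ) (d : X → ℕ) (n : ℕ) :
    ∀ F : Finset (X × Fin N), (∑ p ∈ F, ((p.2 : ℕ))) ≤ n →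
      (∀ x, (row F x).card = d x) →
      cnt s (Finset.univ.filter (fun p : X × Fin N => (p.2 : ℕ) < d p.1)) ≤ cnt s F := by
  induction n with
  | zero =>
    intro F hw hd
    by_cases hcl : ∀ p ∈ F, ∀ q : Fin N, (q : ℕ) < (p.2 : ℕ) → (p.1, q) ∈ F
    · rw [← closed_eq F d hd hcl]
    · push_neg at hcl
      obtain ⟨p, hp, q, hq, hnq⟩ := hcl
      have h0 : (p.1, p.2) ∈ F ∧ (p.1, q) ∉ F := ⟨by rwa [Prod.mk.eta], hnq⟩
      have := wt_cpr_lt F q p.2 hq h0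
      omega
  | succ n ih =>
    intro F hw hd
    by_cases hcl : ∀ p ∈ F, ∀ q : Fin N, (q : ℕ) < (p.2 : ℕ) → (p.1, q) ∈ F
    · rw [← closed_eq F d hd hcl]
    · push_neg at hcl
      obtain ⟨p, hp, q, hq, hnq⟩ := hcl
      have h0 : (p.1, p.2) ∈ F ∧ (p.1, q) ∉ F := ⟨by rwa [Prod.mk.eta], hnq⟩
      have hij : q ≠ p.2 := fun h => by rw [h] at hq; omega
      have hwt := wt_cpr_lt F q p.2 hq h0
      have hdeg : ∀ x, (row (cpr F q p.2) x).card = d x :=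
        fun x => (card_row_cpr F q p.2 hij x).trans (hd x)
      exact le_trans (ih (cpr F q p.2) (by omega) hdeg) (cnt_cpr_le s F hij)

end Core


/-- Among all bipartite graphs `F` on `X ∪ Y` (with `Y = Fin N` ordered) having prescribed
left degrees `d x`, the probability that `L ∩ F` admits an `X`-perfect matching — where
`L` gives each `x ∈ X` an independent uniform `s`-subset of `Y` as neighborhood — is
minimized by the graph in which each `x` is joined to the first `d x` vertices of `Y`. -/
theorem stmt6 {X : Type*} [Fintype X] [DecidableEq X] (N : ℕ)
    (hXY : Fintype.card X ≤ N) (d : X → ℕ) (hd : ∀ x, d x ≤ N)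
    (s : ℕ) (hs : s ≤ N)
    -- the probability, over a uniform choice of `s`-subsets `L x ⊆ Y` (independently
    -- for each `x ∈ X`), that the graph `L ∩ E` has an `X`-perfect matching
    (Pm : Finset (X × Fin N) → ℝ)
    (hPm : ∀ E : Finset (X × Fin N), Pm E =
      ((Finset.univ.filter
          (fun g : {g : X → Finset (Fin N) // ∀ x, (g x).card = s} =>
            ∃ f : X ↪ Fin N, ∀ x, (x, f x) ∈ E ∧ f x ∈ g.1 x)).card : ℝ) /
        (Fintype.card {g : X → Finset (Fin N) // ∀ x, (g x).card = s})) :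
    ∀ F : Finset (X × Fin N),
      (∀ x : X, (Finset.univ.filter (fun y : Fin N => (x, y) ∈ F)).card = d x) →
      Pm (Finset.univ.filter (fun p : X × Fin N => (p.2 : ℕ) < d p.1)) ≤ Pm F := by
  intro F hF
  rw [hPm, hPm]
  have hpos : (0 : ℝ) < (Fintype.card {g : X → Finset (Fin N) // ∀ x, (g x).card = s} : ℝ) := by
    have hne : Nonempty {g : X → Finset (Fin N) // ∀ x, (g x).card = s} := by
      obtain ⟨S, _, hcard⟩ := Finset.exists_subset_card_eq
        (s := (Finset.univ : Finset (Fin N))) (n := s) (by simpa using hs)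
      exact ⟨⟨fun _ => S, fun _ => hcard⟩⟩
    exact_mod_cast Fintype.card_pos
  have hkey : cnt s (Finset.univ.filter (fun p : X × Fin N => (p.2 : ℕ) < d p.1)) ≤ cnt s F :=
    key s d (∑ p ∈ F, ((p.2 : ℕ))) F le_rfl hF
  apply div_le_div_of_nonneg_right ?_ (le_of_lt hpos)
  exact_mod_cast hkey
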